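/- Let G be a finite simple graph with a vertex cover S such that every vertex of V(G)∖S has degree at least 3 in G. If c₁ and c₂ are 2-CNCF-colorings of G with c₁(s) = c₂(s) for all s ∈ S, then c₁ = c₂. In other words, a 2-CNCF-coloring of such a graph is uniquely determined by its restriction to the vertex cover. -/
import Mathlib


inductive Color where
  | red
  | blue
deriving DecidableEq

/-- A coloring `c` of the vertices of `G` is a closed-neighborhood conflict-free
coloring if every closed neighborhood `N[v] = {v} ∪ N(v)` contains a vertex whose
color is unique in `N[v]`. -/
def IsCNCF {V C : Type*} (G : SimpleGraph V) (c : V → C) : Prop :=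
  ∀ v : V, ∃ u ∈ insert v (G.neighborSet v),
    ∀ w ∈ insert v (G.neighborSet v), w ≠ u → c w ≠ c u

lemma color_two : ∀ (a b c : Color), a ≠ c → b ≠ c → a = b := by
  rintro (_|_) (_|_) (_|_) h1 h2 <;> simp_all

lemma color_or : ∀ (x a b : Color), a ≠ b → x = a ∨ x = b := by
  rintro (_|_) (_|_) (_|_) h <;> simp_all

/-- If `S` is a vertex cover of `G` and every vertex outside `S` has degree at
least 3, then any two 2-CNCF-colorings of `G` agreeing on `S` are equal. -/
theorem two_CNCF_determined_by_vc {V : Type*} [Fintype V] [DecidableEq V]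
    (G : SimpleGraph V) [DecidableRel G.Adj]
    (S : Set V) (hvc : ∀ ⦃a b : V⦄, G.Adj a b → a ∈ S ∨ b ∈ S)
    (hdeg : ∀ v : V, v ∉ S → 3 ≤ G.degree v)
    (c₁ c₂ : V → Color) (h₁ : IsCNCF G c₁) (h₂ : IsCNCF G c₂)
    (hagree : ∀ s ∈ S, c₁ s = c₂ s) :
    c₁ = c₂ := by
  funext v
  by_cases hv : v ∈ S
  · exact hagree v hv
  by_contra hne
  have hag : ∀ w, G.Adj v w → c₁ w = c₂ w := fun w h =>
    hagree w ((hvc h).resolve_left hv)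
  have hd : 3 ≤ (G.neighborFinset v).card := by
    rw [SimpleGraph.card_neighborFinset_eq_degree]; exact hdeg v hv
  obtain ⟨u₁, hu₁mem, hu₁⟩ := h₁ v
  obtain ⟨u₂, hu₂mem, hu₂⟩ := h₂ v
  rcases Set.mem_insert_iff.mp hu₁mem with h1v | h1adj
  · -- unique vertex for c₁ is v itself: all neighbors have color ≠ c₁ v
    subst h1v
    -- all vertices in N[v] have c₂-color c₂ v
    have hall : ∀ w ∈ insert u₁ (G.neighborSet u₁), c₂ w = c₂ u₁ := by
      intro w hw
      rcases Set.mem_insert_iff.mp hw with rfl | hadj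
      · rfl
      · have hwadj : G.Adj u₁ w := hadj
        have h1 : c₁ w ≠ c₁ u₁ := hu₁ w hw hwadj.ne'
        have := hag w hwadj
        have : c₂ w = c₂ u₁ := by
          rw [← this]; exact color_two _ _ _ h1 (Ne.symm hne)
        exact this
    -- find a vertex in N[v] different from u₂
    have hmem2 := hall u₂ hu₂mem
    by_cases hu2v : u₂ = u₁
    · -- pick any neighbor
      have : (G.neighborFinset u₁).Nonempty := by
        rw [← Finset.card_pos]; omega
      obtain ⟨a, ha⟩ := this
      have haadj : G.Adj u₁ a := (SimpleGraph.mem_neighborFinset ..).mp ha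
      have hamem : a ∈ insert u₁ (G.neighborSet u₁) := Set.mem_insert_iff.mpr
        (Or.inr haadj)
      exact hu₂ a hamem (by rw [hu2v]; exact haadj.ne') (by rw [hall a hamem, hmem2])
    · exact hu₂ u₁ (Set.mem_insert _ _) (Ne.symm hu2v) (by rw [hmem2])
  · -- unique vertex for c₁ is a neighbor u₁
    have hadj1 : G.Adj v u₁ := h1adj
    have hvne : c₁ v ≠ c₁ u₁ := hu₁ v (Set.mem_insert _ _) hadj1.ne
    -- c₂ u₁ = c₂ v
    have hu1col : c₂ u₁ = c₂ v := by
      rw [← hag u₁ hadj1]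
      exact color_two _ _ _ (Ne.symm hvne) (Ne.symm hne)
    -- every neighbor w ≠ u₁ has c₂ w = c₁ v
    have hothers : ∀ w, G.Adj v w → w ≠ u₁ → c₂ w = c₁ v := by
      intro w hw hwne
      have h1 : c₁ w ≠ c₁ u₁ :=
        hu₁ w (Set.mem_insert_iff.mpr (Or.inr hw)) hwne
      rw [← hag w hw]
      exact color_two _ _ _ h1 hvne
    -- two distinct neighbors other than u₁
    have hcard : 1 < ((G.neighborFinset v).erase u₁).card := by
      have := Finset.pred_card_le_card_erase (s := G.neighborFinset v) (a := u₁)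
      omega
    obtain ⟨a, ha, b, hb, hab⟩ := Finset.one_lt_card.mp hcard
    have haadj : G.Adj v a := (SimpleGraph.mem_neighborFinset ..).mp (Finset.mem_of_mem_erase ha)
    have hbadj : G.Adj v b := (SimpleGraph.mem_neighborFinset ..).mp (Finset.mem_of_mem_erase hb)
    have hane : a ≠ u₁ := Finset.ne_of_mem_erase ha
    have hbne : b ≠ u₁ := Finset.ne_of_mem_erase hb
    have hacol : c₂ a = c₁ v := hothers a haadj hane
    have hbcol : c₂ b = c₁ v := hothers b hbadj hbne
    have hne2 : c₂ v ≠ c₁ v := Ne.symm hne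
    rcases color_or (c₂ u₂) (c₂ v) (c₁ v) hne2 with h | h
    · -- both v and u₁ have color c₂ v; one of them ≠ u₂
      by_cases hq : u₂ = v
      · exact hu₂ u₁ (Set.mem_insert_iff.mpr (Or.inr hadj1)) (by rw [hq]; exact hadj1.ne')
          (by rw [hu1col, h])
      · exact hu₂ v (Set.mem_insert _ _) (Ne.symm hq) (by rw [h])
    · -- both a and b have color c₁ v; one of them ≠ u₂
      by_cases hq : u₂ = a
      · exact hu₂ b (Set.mem_insert_iff.mpr (Or.inr hbadj)) (by rw [hq]; exact hab.symm)
          (by rw [hbcol, h])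
      · exact hu₂ a (Set.mem_insert_iff.mpr (Or.inr haadj)) (Ne.symm hq)
          (by rw [hacol, h])
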